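/- Let P₁,…,P_k ∈ {0,1}^{r×n} be a patch structure, α ∈ [0,1], and f_w(x) = (1/k)·Σ_{i=1}^k σ_α(wᵀPᵢx). Let μ be a probability measure on ℝⁿ symmetric about the origin with finite second moments, Σ = E_{x∼μ}[xxᵀ], and define the loss L(w) = E_{x∼μ}[(f_{w*}(x) − f_w(x))²]. Then for every w, w* ∈ ℝ^r, L(w) ≤ ((1+α)·λ_max(Σ)/2)·‖w* − w‖², where λ_max(Σ) is the maximum eigenvalue of the symmetric positive semidefinite matrix Σ. -/

import Mathlib

open MeasureTheory Matrix Finset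
open scoped RealInnerProductSpace

noncomputable section

/-- Leaky ReLU activation with parameter `α`. -/
def lrelu (α z : ℝ) : ℝ := if 0 ≤ z then z else α * z

/-- A patch structure: each `P i` is a 0/1 matrix with exactly one 1 in each row
and at most one 1 in each column. -/
def IsPatchStruct {r n k : ℕ} (P : Fin k → Matrix (Fin r) (Fin n) ℝ) : Prop :=
  (∀ i a b, P i a b = 0 ∨ P i a b = 1) ∧
  (∀ i a, ∃! b, P i a b = 1) ∧
  (∀ i b a a', P i a b = 1 → P i a' b = 1 → a = a')

/-- View a plain vector as an element of Euclidean space. -/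
def toEuc {m : ℕ} (v : Fin m → ℝ) : EuclideanSpace ℝ (Fin m) := WithLp.toLp 2 v

/-- The one-hidden-layer convolutional network
`f_w(x) = (1/k) ∑ i, σ_α (wᵀ Pᵢ x)` with average pooling. -/
def convnet {r n k : ℕ} (α : ℝ) (P : Fin k → Matrix (Fin r) (Fin n) ℝ)
    (w : EuclideanSpace ℝ (Fin r)) (x : EuclideanSpace ℝ (Fin n)) : ℝ :=
  (1 / (k : ℝ)) * ∑ i, lrelu α ((w : Fin r → ℝ) ⬝ᵥ (P i).mulVec x)

/-- The (uncentered) covariance matrix `Σ = E_{x∼μ}[x xᵀ]`. -/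
def covMat {n : ℕ} (μ : Measure (EuclideanSpace ℝ (Fin n))) : Matrix (Fin n) (Fin n) ℝ :=
  Matrix.of fun i j => ∫ x, x i * x j ∂μ

/-- Maximum eigenvalue of a Hermitian (real symmetric) matrix. -/
def lamMax {m : ℕ} (A : Matrix (Fin m) (Fin m) ℝ) (hA : A.IsHermitian) : ℝ :=
  ⨆ i, hA.eigenvalues i

/-- Minimum eigenvalue of a Hermitian (real symmetric) matrix. -/
def lamMin {m : ℕ} (A : Matrix (Fin m) (Fin m) ℝ) (hA : A.IsHermitian) : ℝ :=
  ⨅ i, hA.eigenvalues i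

/-! ### Auxiliary lemmas -/

lemma lrelu_eq (α z : ℝ) : lrelu α z = (1 + α) / 2 * z + (1 - α) / 2 * |z| := by
  unfold lrelu
  split
  · rw [abs_of_nonneg ‹_›]; ring
  · rw [abs_of_neg (lt_of_not_ge ‹_›)]; ring

lemma eig_le_lamMax {m : ℕ} (A : Matrix (Fin m) (Fin m) ℝ) (hA : A.IsHermitian) (i : Fin m) :
    hA.eigenvalues i ≤ lamMax A hA :=
  le_ciSup (Finite.bddAbove_range _) i

lemma lamMax_bound {m : ℕ} (A : Matrix (Fin m) (Fin m) ℝ) (hA : A.IsHermitian)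
    (u : Fin m → ℝ) : u ⬝ᵥ A.mulVec u ≤ lamMax A hA * (u ⬝ᵥ u) := by
  classical
  set U : Matrix (Fin m) (Fin m) ℝ := (hA.eigenvectorUnitary : Matrix (Fin m) (Fin m) ℝ) with hU
  have hstar : star U = Uᵀ := by
    ext i j; simp [Matrix.star_apply]
  set y : Fin m → ℝ := (star U).mulVec u with hy
  have huy : u ᵥ* U = y := by rw [hy, hstar, mulVec_transpose]
  have hyy : y ⬝ᵥ y = u ⬝ᵥ u := by
    nth_rewrite 2 [hy]
    rw [dotProduct_mulVec, ← mulVec_transpose (star U) y, hstar, transpose_transpose, hy,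
      mulVec_mulVec, (mem_unitaryGroup_iff.mp hA.eigenvectorUnitary.2 : U * star U = 1),
      one_mulVec]
  have key : u ⬝ᵥ A.mulVec u = ∑ i, hA.eigenvalues i * y i ^ 2 := by
    conv_lhs => rw [hA.spectral_theorem]
    simp only [Unitary.conjStarAlgAut_apply, ← hU]
    rw [← mulVec_mulVec, ← mulVec_mulVec, dotProduct_mulVec u U, huy]
    simp [dotProduct, mulVec_diagonal, RCLike.ofReal_real_eq_id]
    exact Finset.sum_congr rfl fun i _ => by ring
  rw [key, ← hyy]
  have : y ⬝ᵥ y = ∑ i, y i ^ 2 := by simp [dotProduct, sq]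
  rw [this, Finset.mul_sum]
  exact Finset.sum_le_sum fun i _ => by
    have := eig_le_lamMax A hA i
    nlinarith [sq_nonneg (y i)]

lemma patch_mul_transpose {r n k : ℕ} {P : Fin k → Matrix (Fin r) (Fin n) ℝ}
    (hP : IsPatchStruct P) (i : Fin k) : P i * (P i)ᵀ = 1 := by
  obtain ⟨h01, hrow, hcol⟩ := hP
  ext a a'
  rw [Matrix.mul_apply]
  simp only [Matrix.transpose_apply]
  obtain ⟨b0, hb0, hb0u⟩ := hrow i a
  by_cases haa : a = a'
  · subst haa
    rw [Finset.sum_eq_single b0]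
    · simp [hb0, Matrix.one_apply]
    · intro b _ hb
      rcases h01 i a b with h | h
      · rw [h, zero_mul]
      · exact absurd (hb0u b h) hb
    · simp
  · rw [Finset.sum_eq_zero, Matrix.one_apply_ne haa]
    intro b _
    rcases h01 i a b with h | h
    · rw [h, zero_mul]
    · rcases h01 i a' b with h' | h'
      · rw [h', mul_zero]
      · exact absurd (hcol i b a a' h h') haa

lemma patch_vecMul_dot {r n k : ℕ} {P : Fin k → Matrix (Fin r) (Fin n) ℝ}
    (hP : IsPatchStruct P) (i : Fin k) (v : Fin r → ℝ) :
    (v ᵥ* P i) ⬝ᵥ (v ᵥ* P i) = v ⬝ᵥ v := by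
  rw [← Matrix.mulVec_transpose, Matrix.dotProduct_mulVec, ← Matrix.mulVec_transpose,
    Matrix.transpose_transpose, Matrix.mulVec_mulVec,
    patch_mul_transpose hP i, Matrix.one_mulVec]

lemma abs_apply_le_norm {n : ℕ} (x : EuclideanSpace ℝ (Fin n)) (i : Fin n) : |x i| ≤ ‖x‖ := by
  rw [EuclideanSpace.norm_eq, ← Real.sqrt_sq_eq_abs]
  apply Real.sqrt_le_sqrt
  have : x i ^ 2 = ‖x i‖ ^ 2 := by simp [Real.norm_eq_abs, sq_abs]
  rw [this]
  exact Finset.single_le_sum (f := fun j => ‖x j‖ ^ 2) (fun j _ => by positivity) (mem_univ i)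

lemma cont_apply {n : ℕ} (i : Fin n) : Continuous fun x : EuclideanSpace ℝ (Fin n) => x i :=
  (EuclideanSpace.proj i : EuclideanSpace ℝ (Fin n) →L[ℝ] ℝ).continuous

lemma cont_dot {n : ℕ} (u : Fin n → ℝ) :
    Continuous fun x : EuclideanSpace ℝ (Fin n) => u ⬝ᵥ (x : Fin n → ℝ) := by
  simp only [dotProduct]
  exact continuous_finset_sum _ fun j _ => continuous_const.mul (cont_apply j)

lemma dot_sq_le {n : ℕ} (u : Fin n → ℝ) (x : EuclideanSpace ℝ (Fin n)) :
    (u ⬝ᵥ (x : Fin n → ℝ)) ^ 2 ≤ ‖toEuc u‖ ^ 2 * ‖x‖ ^ 2 := by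
  have h1 : u ⬝ᵥ (x : Fin n → ℝ) = ⟪toEuc u, x⟫ := by
    simp [PiLp.inner_apply, RCLike.inner_apply, dotProduct, toEuc, mul_comm]
  have h2 := abs_real_inner_le_norm (toEuc u) x
  rw [h1, ← sq_abs, ← mul_pow]
  exact pow_le_pow_left₀ (abs_nonneg _) h2 2

lemma int_mul_apply {n : ℕ} (μ : Measure (EuclideanSpace ℝ (Fin n)))
    (hmom : Integrable (fun x => ‖x‖ ^ 2) μ) (i j : Fin n) :
    Integrable (fun x : EuclideanSpace ℝ (Fin n) => x i * x j) μ := by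
  apply hmom.mono' (((cont_apply i).mul (cont_apply j)).aestronglyMeasurable)
  filter_upwards with x
  rw [Real.norm_eq_abs, Pi.mul_apply, abs_mul]
  calc |x i| * |x j| ≤ ‖x‖ * ‖x‖ :=
        mul_le_mul (abs_apply_le_norm x i) (abs_apply_le_norm x j) (abs_nonneg _) (norm_nonneg _)
    _ = ‖x‖ ^ 2 := (sq ‖x‖).symm

lemma cov_quad {n : ℕ} (μ : Measure (EuclideanSpace ℝ (Fin n)))
    (hmom : Integrable (fun x => ‖x‖ ^ 2) μ) (u : Fin n → ℝ) :
    u ⬝ᵥ (covMat μ).mulVec u = ∫ x, (u ⬝ᵥ (x : Fin n → ℝ)) ^ 2 ∂μ := by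
  have expand : ∀ x : EuclideanSpace ℝ (Fin n),
      (u ⬝ᵥ (x : Fin n → ℝ)) ^ 2 = ∑ i, ∑ j, u i * u j * (x i * x j) := by
    intro x
    rw [dotProduct, sq, Finset.sum_mul_sum]
    exact Finset.sum_congr rfl fun i _ => Finset.sum_congr rfl fun j _ => by ring
  rw [integral_congr_ae (Filter.Eventually.of_forall expand)]
  rw [integral_finset_sum _ fun i _ => integrable_finset_sum _ fun j _ =>
    ((int_mul_apply μ hmom i j).const_mul _)]
  simp_rw [integral_finset_sum _ fun j _ => ((int_mul_apply μ hmom _ j).const_mul _),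
    integral_const_mul]
  rw [dotProduct, Finset.sum_congr rfl fun i _ => ?_]
  rw [mulVec, dotProduct, Finset.mul_sum]
  exact Finset.sum_congr rfl fun j _ => by simp [covMat]; ring

lemma lamMax_nonneg {m : ℕ} (A : Matrix (Fin m) (Fin m) ℝ) (hA : A.IsHermitian)
    (hpsd : ∀ u : Fin m → ℝ, 0 ≤ u ⬝ᵥ A.mulVec u) : 0 ≤ lamMax A hA := by
  rcases Nat.eq_zero_or_pos m with hm | hm
  · haveI : IsEmpty (Fin m) := by rw [hm]; infer_instance
    unfold lamMax
    rw [iSup, Set.range_eq_empty, Real.sSup_empty]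
  · have i : Fin m := ⟨0, hm⟩
    refine le_trans ?_ (le_ciSup (Finite.bddAbove_range _) i)
    rw [hA.eigenvalues_eq i]
    simpa using hpsd _

lemma avg_sq_le {k : ℕ} (hk : 0 < k) (f : Fin k → ℝ) :
    ((1 / (k : ℝ)) * ∑ i, f i) ^ 2 ≤ (1 / (k : ℝ)) * ∑ i, f i ^ 2 := by
  have h := sq_sum_le_card_mul_sum_sq (s := (univ : Finset (Fin k))) (f := f)
  simp only [card_univ, Fintype.card_fin] at h
  have hk' : (0 : ℝ) < k := by exact_mod_cast hk
  rw [mul_pow]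
  calc (1 / (k : ℝ)) ^ 2 * (∑ i, f i) ^ 2
      ≤ (1 / (k : ℝ)) ^ 2 * ((k : ℝ) * ∑ i, f i ^ 2) :=
        mul_le_mul_of_nonneg_left h (by positivity)
    _ = (1 / (k : ℝ)) * ∑ i, f i ^ 2 := by field_simp

set_option maxHeartbeats 1000000 in
theorem stmt1 {n r k : ℕ} (hk : 0 < k) (P : Fin k → Matrix (Fin r) (Fin n) ℝ)
    (hP : IsPatchStruct P) (α : ℝ) (hα : α ∈ Set.Icc (0 : ℝ) 1)
    (μ : Measure (EuclideanSpace ℝ (Fin n))) [IsProbabilityMeasure μ]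
    (hsymm : μ.map (fun x => -x) = μ)
    (hmom : Integrable (fun x => ‖x‖ ^ 2) μ)
    (hSig : (covMat μ).IsHermitian)
    (w wstar : EuclideanSpace ℝ (Fin r)) :
    ∫ x, (convnet α P wstar x - convnet α P w x) ^ 2 ∂μ
      ≤ (1 + α) * lamMax (covMat μ) hSig / 2 * ‖wstar - w‖ ^ 2 := by
  obtain ⟨hα0, hα1⟩ := hα
  have hk' : (0 : ℝ) < k := by exact_mod_cast hk
  set c1 : ℝ := (1 + α) / 2 with hc1
  set c2 : ℝ := (1 - α) / 2 with hc2
  set v : Fin r → ℝ := (wstar : Fin r → ℝ) - (w : Fin r → ℝ) with hv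
  set u : Fin k → Fin n → ℝ := fun i => v ᵥ* P i with hu
  set a : Fin k → EuclideanSpace ℝ (Fin n) → ℝ := fun i x => u i ⬝ᵥ (x : Fin n → ℝ) with ha
  set b : Fin k → EuclideanSpace ℝ (Fin n) → ℝ :=
    fun i x => (wstar : Fin r → ℝ) ⬝ᵥ (P i).mulVec x with hb
  set c : Fin k → EuclideanSpace ℝ (Fin n) → ℝ :=
    fun i x => (w : Fin r → ℝ) ⬝ᵥ (P i).mulVec x with hc
  have hbc : ∀ i x, b i x - c i x = a i x := by
    intro i x
    rw [ha, hb, hc]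
    simp only [hu, hv, ← Matrix.dotProduct_mulVec, ← sub_dotProduct]
  set g : EuclideanSpace ℝ (Fin n) → ℝ :=
    fun x => convnet α P wstar x - convnet α P w x with hg
  set s : EuclideanSpace ℝ (Fin n) → ℝ := fun x => (1 / (k : ℝ)) * ∑ i, a i x with hs
  set t : EuclideanSpace ℝ (Fin n) → ℝ :=
    fun x => (1 / (k : ℝ)) * ∑ i, (|b i x| - |c i x|) with ht
  have hgst : ∀ x, g x = c1 * s x + c2 * t x := by
    intro x
    rw [hg, hs, ht]
    simp only [convnet, ← hb, ← hc, ← Finset.sum_sub_distrib, ← mul_sub, Finset.mul_sum]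
    rw [← Finset.sum_add_distrib]
    refine Finset.sum_congr rfl fun i _ => ?_
    rw [lrelu_eq, lrelu_eq, ← hbc i x]
    ring
  have hcoeneg : ∀ x : EuclideanSpace ℝ (Fin n), ((-x : EuclideanSpace ℝ (Fin n)) : Fin n → ℝ)
      = -(x : Fin n → ℝ) := fun x => rfl
  have haneg : ∀ i x, a i (-x) = -(a i x) := by
    intro i x
    exact dotProduct_neg (u i) (x : Fin n → ℝ)
  have hbneg : ∀ i x, b i (-x) = -(b i x) := by
    intro i x
    exact (congrArg (fun z => (wstar : Fin r → ℝ) ⬝ᵥ z)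
      (Matrix.mulVec_neg (x : Fin n → ℝ) (P i))).trans (dotProduct_neg _ _)
  have hcneg : ∀ i x, c i (-x) = -(c i x) := by
    intro i x
    exact (congrArg (fun z => (w : Fin r → ℝ) ⬝ᵥ z)
      (Matrix.mulVec_neg (x : Fin n → ℝ) (P i))).trans (dotProduct_neg _ _)
  have hsneg : ∀ x, s (-x) = -(s x) := by
    intro x
    rw [hs]
    simp only [haneg, Finset.sum_neg_distrib, mul_neg]
  have htneg : ∀ x, t (-x) = t x := by
    intro x
    rw [ht]
    simp only [hbneg, hcneg, abs_neg]
  have hgneg : ∀ x, g (-x) = -(c1 * s x) + c2 * t x := by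
    intro x
    rw [hgst (-x), hsneg, htneg]
    ring
  set Q : EuclideanSpace ℝ (Fin n) → ℝ := fun x => (1 / (k : ℝ)) * ∑ i, (a i x) ^ 2 with hQ
  have hsQ : ∀ x, s x ^ 2 ≤ Q x := fun x => avg_sq_le hk fun i => a i x
  have htQ : ∀ x, t x ^ 2 ≤ Q x := by
    intro x
    have h1 : |t x| ≤ (1 / (k : ℝ)) * ∑ i, |a i x| := by
      rw [ht]
      simp only
      rw [abs_mul, abs_of_nonneg (by positivity : (0 : ℝ) ≤ 1 / (k : ℝ))]
      refine mul_le_mul_of_nonneg_left ?_ (by positivity)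
      refine (Finset.abs_sum_le_sum_abs _ _).trans (Finset.sum_le_sum fun i _ => ?_)
      calc |(|b i x| - |c i x|)| ≤ |b i x - c i x| := abs_abs_sub_abs_le_abs_sub _ _
        _ = |a i x| := by rw [hbc]
    calc t x ^ 2 = |t x| ^ 2 := (sq_abs _).symm
      _ ≤ ((1 / (k : ℝ)) * ∑ i, |a i x|) ^ 2 := pow_le_pow_left₀ (abs_nonneg _) h1 2
      _ ≤ (1 / (k : ℝ)) * ∑ i, |a i x| ^ 2 := avg_sq_le hk _
      _ = Q x := by rw [hQ]; simp [sq_abs]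
  have hQnn : ∀ x, 0 ≤ Q x := by
    intro x
    rw [hQ]
    exact mul_nonneg (by positivity) (Finset.sum_nonneg fun i _ => sq_nonneg _)
  have hcsum : c1 ^ 2 + c2 ^ 2 ≤ 1 := by rw [hc1, hc2]; nlinarith
  have hkey : ∀ x, g x ^ 2 + g (-x) ^ 2 ≤ 2 * (c1 ^ 2 + c2 ^ 2) * Q x := by
    intro x
    rw [hgst x, hgneg x]
    nlinarith [mul_le_mul_of_nonneg_left (hsQ x) (sq_nonneg c1),
      mul_le_mul_of_nonneg_left (htQ x) (sq_nonneg c2)]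
  set C : ℝ := (1 / (k : ℝ)) * ∑ i, ‖toEuc (u i)‖ ^ 2 with hC
  have hQb : ∀ x, Q x ≤ C * ‖x‖ ^ 2 := by
    intro x
    rw [hQ, hC]
    simp only
    calc (1 / (k : ℝ)) * ∑ i, (a i x) ^ 2
        ≤ (1 / (k : ℝ)) * ∑ i, ‖toEuc (u i)‖ ^ 2 * ‖x‖ ^ 2 :=
          mul_le_mul_of_nonneg_left (Finset.sum_le_sum fun i _ => dot_sq_le (u i) x)
            (by positivity)
      _ = (1 / (k : ℝ)) * ∑ i, ‖toEuc (u i)‖ ^ 2 * ‖x‖ ^ 2 := rfl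
      _ = ((1 / (k : ℝ)) * ∑ i, ‖toEuc (u i)‖ ^ 2) * ‖x‖ ^ 2 := by
          rw [← Finset.sum_mul]; ring
  have hacont : ∀ i, Continuous (a i) := fun i => cont_dot (u i)
  have hbcont : ∀ i, Continuous (b i) := by
    intro i
    have : b i = fun x : EuclideanSpace ℝ (Fin n) =>
        ((wstar : Fin r → ℝ) ᵥ* P i) ⬝ᵥ (x : Fin n → ℝ) :=
      funext fun x => dotProduct_mulVec _ _ _
    rw [this]
    exact cont_dot _
  have hccont : ∀ i, Continuous (c i) := by
    intro i
    have : c i = fun x : EuclideanSpace ℝ (Fin n) =>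
        ((w : Fin r → ℝ) ᵥ* P i) ⬝ᵥ (x : Fin n → ℝ) :=
      funext fun x => dotProduct_mulVec _ _ _
    rw [this]
    exact cont_dot _
  have hQcont : Continuous Q :=
    continuous_const.mul (continuous_finset_sum _ fun i _ => (hacont i).pow 2)
  have hgcont : Continuous g := by
    rw [funext hgst]
    refine (continuous_const.mul ?_).add (continuous_const.mul ?_)
    · exact continuous_const.mul (continuous_finset_sum _ fun i _ => hacont i)
    · exact continuous_const.mul
        (continuous_finset_sum _ fun i _ => ((hbcont i).abs.sub (hccont i).abs))
  have hQint : Integrable Q μ := by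
    refine (hmom.const_mul C).mono' hQcont.aestronglyMeasurable ?_
    filter_upwards with x
    rw [Real.norm_eq_abs, abs_of_nonneg (hQnn x)]
    exact hQb x
  have hg2leQ : ∀ x, g x ^ 2 ≤ 2 * Q x := by
    intro x
    nlinarith [hkey x, sq_nonneg (g (-x)), hQnn x]
  have hgneg2leQ : ∀ x, g (-x) ^ 2 ≤ 2 * Q x := by
    intro x
    nlinarith [hkey x, sq_nonneg (g x), hQnn x]
  have hg2int : Integrable (fun x => g x ^ 2) μ := by
    refine (hmom.const_mul (2 * C)).mono' ((hgcont.pow 2).aestronglyMeasurable) ?_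
    filter_upwards with x
    rw [Real.norm_eq_abs, abs_of_nonneg (sq_nonneg _)]
    calc g x ^ 2 ≤ 2 * Q x := hg2leQ x
      _ ≤ 2 * (C * ‖x‖ ^ 2) := by linarith [hQb x]
      _ = 2 * C * ‖x‖ ^ 2 := by ring
  have hgneg2int : Integrable (fun x => g (-x) ^ 2) μ := by
    refine (hmom.const_mul (2 * C)).mono'
      (((hgcont.comp continuous_neg).pow 2).aestronglyMeasurable) ?_
    filter_upwards with x
    rw [Real.norm_eq_abs, abs_of_nonneg (sq_nonneg _)]
    calc g (-x) ^ 2 ≤ 2 * Q x := hgneg2leQ x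
      _ ≤ 2 * (C * ‖x‖ ^ 2) := by linarith [hQb x]
      _ = 2 * C * ‖x‖ ^ 2 := by ring
  have hsym2 : ∫ x, g (-x) ^ 2 ∂μ = ∫ x, g x ^ 2 ∂μ := by
    conv_rhs => rw [← hsymm]
    exact (integral_map measurable_neg.aemeasurable
      ((hgcont.pow 2).aestronglyMeasurable)).symm
  have double : 2 * ∫ x, g x ^ 2 ∂μ = ∫ x, (g x ^ 2 + g (-x) ^ 2) ∂μ := by
    rw [integral_add hg2int hgneg2int, hsym2]
    ring
  have ha2int : ∀ i, Integrable (fun x => (a i x) ^ 2) μ := by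
    intro i
    refine (hmom.const_mul (‖toEuc (u i)‖ ^ 2)).mono'
      (((hacont i).pow 2).aestronglyMeasurable) ?_
    filter_upwards with x
    rw [Real.norm_eq_abs, abs_of_nonneg (sq_nonneg _)]
    exact dot_sq_le (u i) x
  have hQeq : ∫ x, Q x ∂μ = (1 / (k : ℝ)) * ∑ i, u i ⬝ᵥ (covMat μ).mulVec (u i) := by
    rw [hQ]
    rw [integral_const_mul, integral_finset_sum _ fun i _ => ha2int i]
    congr 1
    exact Finset.sum_congr rfl fun i _ => (cov_quad μ hmom (u i)).symm
  have hvnorm : v ⬝ᵥ v = ‖wstar - w‖ ^ 2 := by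
    rw [← real_inner_self_eq_norm_sq]
    rw [hv]
    simp [PiLp.inner_apply, RCLike.inner_apply, dotProduct]
    rw [EuclideanSpace.norm_sq_eq]
    simp [sq]
  have hterm : ∀ i, u i ⬝ᵥ (covMat μ).mulVec (u i)
      ≤ lamMax (covMat μ) hSig * ‖wstar - w‖ ^ 2 := by
    intro i
    have h1 := lamMax_bound (covMat μ) hSig (u i)
    have h2 : u i ⬝ᵥ u i = v ⬝ᵥ v := patch_vecMul_dot hP i v
    rwa [h2, hvnorm] at h1
  have hlamnn : 0 ≤ lamMax (covMat μ) hSig := by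
    refine lamMax_nonneg _ _ fun z => ?_
    rw [cov_quad μ hmom z]
    exact integral_nonneg fun x => sq_nonneg _
  have hM : (0 : ℝ) ≤ lamMax (covMat μ) hSig * ‖wstar - w‖ ^ 2 :=
    mul_nonneg hlamnn (sq_nonneg _)
  have hQle : ∫ x, Q x ∂μ ≤ lamMax (covMat μ) hSig * ‖wstar - w‖ ^ 2 := by
    rw [hQeq]
    have hsum : ∑ i, u i ⬝ᵥ (covMat μ).mulVec (u i)
        ≤ (k : ℝ) * (lamMax (covMat μ) hSig * ‖wstar - w‖ ^ 2) := by
      calc ∑ i, u i ⬝ᵥ (covMat μ).mulVec (u i)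
          ≤ ∑ _i : Fin k, lamMax (covMat μ) hSig * ‖wstar - w‖ ^ 2 :=
            Finset.sum_le_sum fun i _ => hterm i
        _ = (k : ℝ) * (lamMax (covMat μ) hSig * ‖wstar - w‖ ^ 2) := by
            simp [Finset.sum_const, nsmul_eq_mul]
    calc (1 / (k : ℝ)) * ∑ i, u i ⬝ᵥ (covMat μ).mulVec (u i)
        ≤ (1 / (k : ℝ)) * ((k : ℝ) * (lamMax (covMat μ) hSig * ‖wstar - w‖ ^ 2)) :=
          mul_le_mul_of_nonneg_left hsum (by positivity)
      _ = lamMax (covMat μ) hSig * ‖wstar - w‖ ^ 2 := by field_simp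
  have key2 : 2 * ∫ x, g x ^ 2 ∂μ
      ≤ 2 * (c1 ^ 2 + c2 ^ 2) * (lamMax (covMat μ) hSig * ‖wstar - w‖ ^ 2) := by
    rw [double]
    calc ∫ x, (g x ^ 2 + g (-x) ^ 2) ∂μ
        ≤ ∫ x, 2 * (c1 ^ 2 + c2 ^ 2) * Q x ∂μ :=
          integral_mono (hg2int.add hgneg2int) (hQint.const_mul _) hkey
      _ = 2 * (c1 ^ 2 + c2 ^ 2) * ∫ x, Q x ∂μ := integral_const_mul _ _
      _ ≤ 2 * (c1 ^ 2 + c2 ^ 2) * (lamMax (covMat μ) hSig * ‖wstar - w‖ ^ 2) := by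
          refine mul_le_mul_of_nonneg_left hQle ?_
          have : (0 : ℝ) ≤ c1 ^ 2 + c2 ^ 2 := by positivity
          linarith
  have hfac : c1 ^ 2 + c2 ^ 2 ≤ c1 := by rw [hc1, hc2]; nlinarith
  have hfinal : ∫ x, g x ^ 2 ∂μ ≤ c1 * (lamMax (covMat μ) hSig * ‖wstar - w‖ ^ 2) := by
    have h := mul_le_mul_of_nonneg_right hfac hM
    linarith [key2, h]
  calc ∫ x, (convnet α P wstar x - convnet α P w x) ^ 2 ∂μ
      = ∫ x, g x ^ 2 ∂μ := rfl
    _ ≤ c1 * (lamMax (covMat μ) hSig * ‖wstar - w‖ ^ 2) := hfinal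
    _ = (1 + α) * lamMax (covMat μ) hSig / 2 * ‖wstar - w‖ ^ 2 := by rw [hc1]; ring
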